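/- Let Z be a finite set, Q₀ a pmf on Z with Q₀(z) > 0 for all z, and P a pmf on Z. Define g : ℝ → ℝ by g(t) = D((1−t)·Q₀ + t·P ‖ Q₀) = ∑_{z∈Z} ((1−t)·Q₀(z) + t·P(z))·(Real.log((1−t)·Q₀(z) + t·P(z)) − Real.log(Q₀(z))). Then g has a derivative at t = 0 equal to 0, and the second derivative of g at t = 0 (i.e., deriv (deriv g) at 0) equals χ²(P ‖ Q₀). -/

import Mathlib

open Real

/-- χ²-distance of finite-alphabet "distributions" `p`, `q`. -/
noncomputable def chiSq {Z : Type*} [Fintype Z] (p q : Z → ℝ) : ℝ :=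
  ∑ z, (p z - q z) ^ 2 / q z

private lemma lin_deriv (a p t : ℝ) :
    HasDerivAt (fun s : ℝ => (1 - s) * a + s * p) (p - a) t := by
  have h := ((hasDerivAt_id t).const_mul (p - a)).add_const a
  have heq : (fun s : ℝ => (1 - s) * a + s * p) = fun s : ℝ => (p - a) * s + a := by
    funext s; ring
  rw [heq]
  simpa using h

private lemma log_deriv (a p : ℝ) {t : ℝ} (hu : 0 < (1 - t) * a + t * p) :
    HasDerivAt (fun s : ℝ => Real.log ((1 - s) * a + s * p))
      (((1 - t) * a + t * p)⁻¹ * (p - a)) t :=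
  (Real.hasDerivAt_log hu.ne').comp (h := fun s : ℝ => (1 - s) * a + s * p) t (lin_deriv a p t)

private lemma aux1 (a p : ℝ) {t : ℝ} (hu : 0 < (1 - t) * a + t * p) :
    HasDerivAt (fun s : ℝ => ((1 - s) * a + s * p) *
        (Real.log ((1 - s) * a + s * p) - Real.log a))
      ((p - a) * (Real.log ((1 - t) * a + t * p) - Real.log a + 1)) t := by
  have h := (lin_deriv a p t).mul ((log_deriv a p hu).sub_const (Real.log a))
  refine h.congr_deriv ?_
  rw [mul_inv_cancel_left₀ hu.ne']
  ring

private lemma aux2 (a p : ℝ) {t : ℝ} (hu : 0 < (1 - t) * a + t * p) :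
    HasDerivAt (fun s : ℝ => (p - a) *
        (Real.log ((1 - s) * a + s * p) - Real.log a + 1))
      ((p - a) ^ 2 / ((1 - t) * a + t * p)) t := by
  have h := (((log_deriv a p hu).sub_const (Real.log a)).add_const 1).const_mul (p - a)
  refine h.congr_deriv ?_
  field_simp

theorem stmt_4 {Z : Type*} [Fintype Z]
    (Q₀ P : Z → ℝ)
    (hQ0pos : ∀ z, 0 < Q₀ z) (hQ0sum : ∑ z, Q₀ z = 1)
    (hP0 : ∀ z, 0 ≤ P z) (hPsum : ∑ z, P z = 1)
    (g : ℝ → ℝ)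
    (hg : ∀ t, g t = ∑ z, ((1 - t) * Q₀ z + t * P z) *
      (Real.log ((1 - t) * Q₀ z + t * P z) - Real.log (Q₀ z))) :
    HasDerivAt g 0 0 ∧ deriv (deriv g) 0 = chiSq P Q₀ := by
  have hfun : g = fun t => ∑ z, ((1 - t) * Q₀ z + t * P z) *
      (Real.log ((1 - t) * Q₀ z + t * P z) - Real.log (Q₀ z)) := funext hg
  subst hfun
  have hZ : Nonempty Z := by
    rcases isEmpty_or_nonempty Z with h | h
    · rw [Finset.univ_eq_empty] at hQ0sum; simp at hQ0sum
    · exact h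
  have hne : (Finset.univ : Finset Z).Nonempty := Finset.univ_nonempty
  set ε : ℝ := Finset.univ.inf' hne (fun z => Q₀ z / (|P z - Q₀ z| + 1)) with hεdef
  have hεpos : 0 < ε := by
    rw [hεdef, Finset.lt_inf'_iff]
    intro z _
    have := hQ0pos z
    positivity
  have hpos : ∀ t : ℝ, |t| < ε → ∀ z, 0 < (1 - t) * Q₀ z + t * P z := by
    intro t ht z
    have hle : ε ≤ Q₀ z / (|P z - Q₀ z| + 1) :=
      Finset.inf'_le _ (Finset.mem_univ z)
    have hb : (0:ℝ) ≤ |P z - Q₀ z| := abs_nonneg _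
    have h1 : |t| * (|P z - Q₀ z| + 1) < Q₀ z := by
      have := lt_of_lt_of_le ht hle
      rw [lt_div_iff₀ (by linarith)] at this
      exact this
    have h2 : |t * (P z - Q₀ z)| ≤ |t| * (|P z - Q₀ z| + 1) := by
      rw [abs_mul]
      have := abs_nonneg t
      nlinarith
    have h3 : -(Q₀ z) < t * (P z - Q₀ z) := by
      have := neg_abs_le (t * (P z - Q₀ z))
      linarith
    nlinarith
  have hG1 : ∀ t : ℝ, |t| < ε →
      HasDerivAt (fun s => ∑ z, ((1 - s) * Q₀ z + s * P z) *
          (Real.log ((1 - s) * Q₀ z + s * P z) - Real.log (Q₀ z)))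
        (∑ z, (P z - Q₀ z) *
          (Real.log ((1 - t) * Q₀ z + t * P z) - Real.log (Q₀ z) + 1)) t := by
    intro t ht
    exact HasDerivAt.fun_sum fun z _ => aux1 (Q₀ z) (P z) (hpos t ht z)
  have h0ε : |(0:ℝ)| < ε := by simpa using hεpos
  constructor
  · have h0 := hG1 0 h0ε
    have heval : (∑ z, (P z - Q₀ z) *
        (Real.log ((1 - (0:ℝ)) * Q₀ z + 0 * P z) - Real.log (Q₀ z) + 1)) = 0 := by
      have : ∀ z : Z, (P z - Q₀ z) *
          (Real.log ((1 - (0:ℝ)) * Q₀ z + 0 * P z) - Real.log (Q₀ z) + 1)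
          = P z - Q₀ z := by
        intro z; norm_num
      rw [Finset.sum_congr rfl fun z _ => this z, Finset.sum_sub_distrib,
        hPsum, hQ0sum]
      ring
    rw [heval] at h0
    exact h0
  · set G1 : ℝ → ℝ := fun t => ∑ z, (P z - Q₀ z) *
      (Real.log ((1 - t) * Q₀ z + t * P z) - Real.log (Q₀ z) + 1) with hG1def
    have hev : deriv (fun s => ∑ z, ((1 - s) * Q₀ z + s * P z) *
        (Real.log ((1 - s) * Q₀ z + s * P z) - Real.log (Q₀ z))) =ᶠ[nhds 0] G1 := by
      filter_upwards [Metric.ball_mem_nhds (0:ℝ) hεpos] with t ht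
      rw [mem_ball_zero_iff, Real.norm_eq_abs] at ht
      exact (hG1 t ht).deriv
    rw [hev.deriv_eq]
    have hd : HasDerivAt G1
        (∑ z, (P z - Q₀ z) ^ 2 / ((1 - (0:ℝ)) * Q₀ z + 0 * P z)) 0 :=
      HasDerivAt.fun_sum fun z _ => aux2 (Q₀ z) (P z) (hpos 0 h0ε z)
    rw [hd.deriv]
    simp [chiSq]
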